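/- (von Bahr–Esseen type inequality) Let 1 ≤ δ ≤ 2 and let ξ₁,…,ξₙ be independent random variables with E ξ_j = 0 and E|ξ_j|^δ < ∞ for each j. Then E|ξ₁+⋯+ξₙ|^δ ≤ (2 − 1/n) Σ_{j=1}^n E|ξ_j|^δ. -/

import Mathlib

open MeasureTheory ProbabilityTheory
open scoped NNReal

lemma vbe_rpow_subadd {p a b : ℝ} (hp0 : 0 ≤ p) (hp1 : p ≤ 1) (ha : 0 ≤ a) (hb : 0 ≤ b) :
    (a + b) ^ p ≤ a ^ p + b ^ p := by
  have key := NNReal.rpow_add_le_add_rpow a.toNNReal b.toNNReal hp0 hp1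
  have h2 : ((a.toNNReal + b.toNNReal : ℝ≥0) : ℝ) = a + b := by
    simp [Real.coe_toNNReal _ ha, Real.coe_toNNReal _ hb]
  calc (a + b) ^ p = ((a.toNNReal + b.toNNReal : ℝ≥0) : ℝ) ^ p := by rw [h2]
    _ = (((a.toNNReal + b.toNNReal) ^ p : ℝ≥0) : ℝ) := by rw [NNReal.coe_rpow]
    _ ≤ (((a.toNNReal ^ p + b.toNNReal ^ p : ℝ≥0)) : ℝ) := by exact_mod_cast key
    _ = a ^ p + b ^ p := by
        push_cast [NNReal.coe_rpow]
        rw [Real.coe_toNNReal _ ha, Real.coe_toNNReal _ hb]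

lemma vbe_core1 {δ : ℝ} (hδ1 : 1 ≤ δ) (hδ2 : δ ≤ 2) {t : ℝ} (ht : 0 ≤ t) :
    (1 + t) ^ δ ≤ 1 + δ * t + t ^ δ := by
  have hδ0 : (0:ℝ) < δ := lt_of_lt_of_le one_pos hδ1
  set F : ℝ → ℝ := fun t => 1 + δ * t + t ^ δ - (1 + t) ^ δ with hF
  have hc : Continuous fun t : ℝ => t ^ δ := Real.continuous_rpow_const hδ0.le
  have hmono : MonotoneOn F (Set.Ici (0:ℝ)) := by
    apply monotoneOn_of_hasDerivWithinAt_nonneg (convex_Ici 0)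
      (f' := fun x => δ + δ * x ^ (δ - 1) - δ * (1 + x) ^ (δ - 1))
    · apply ContinuousOn.sub
      · exact ((continuous_const.add (continuous_const.mul continuous_id)).add
          hc).continuousOn
      · exact (hc.comp (continuous_const.add continuous_id)).continuousOn
    · intro x hx
      rw [interior_Ici] at hx
      have hx0 : (0:ℝ) < x := hx
      have h1 : HasDerivAt (fun t : ℝ => t ^ δ) (δ * x ^ (δ - 1)) x := by
        simpa using Real.hasDerivAt_rpow_const (x := x) (p := δ) (Or.inl hx0.ne')
      have h2 : HasDerivAt (fun t : ℝ => (1 + t) ^ δ) (1 * δ * (1 + x) ^ (δ - 1)) x :=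
        ((hasDerivAt_id x).const_add 1).rpow_const (Or.inr hδ1)
      have h3 : HasDerivAt F (δ + δ * x ^ (δ - 1) - δ * (1 + x) ^ (δ - 1)) x := by
        have h4 := ((((hasDerivAt_id x).const_mul δ).const_add 1).add h1).sub h2
        refine h4.congr_deriv ?_
        ring
      exact h3.hasDerivWithinAt
    · intro x hx
      rw [interior_Ici] at hx
      have hx0 : (0:ℝ) < x := hx
      have hsub : (1 + x) ^ (δ - 1) ≤ 1 + x ^ (δ - 1) := by
        have h5 := vbe_rpow_subadd (p := δ - 1) (by linarith) (by linarith) zero_le_one hx0.le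
        simpa using h5
      nlinarith
  have h0 : F 0 = 0 := by simp [hF, Real.zero_rpow hδ0.ne']
  have hm := hmono (Set.self_mem_Ici) (Set.mem_Ici.2 ht) ht
  rw [h0] at hm
  simp only [hF] at hm
  linarith

lemma vbe_core2 {δ : ℝ} (hδ1 : 1 ≤ δ) (hδ2 : δ ≤ 2) {s : ℝ} (hs0 : 0 ≤ s) (hs1 : s ≤ 1) :
    (1 - s) ^ δ ≤ 1 - δ * s + 2 * s ^ δ := by
  have hδ0 : (0:ℝ) < δ := lt_of_lt_of_le one_pos hδ1
  have hc : Continuous fun t : ℝ => t ^ δ := Real.continuous_rpow_const hδ0.le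
  set G : ℝ → ℝ := fun s => 1 - δ * s + (δ/2) * s^2 - (1 - s) ^ δ with hG
  have hmono : MonotoneOn G (Set.Icc (0:ℝ) 1) := by
    apply monotoneOn_of_hasDerivWithinAt_nonneg (convex_Icc 0 1)
      (f' := fun x => -δ + (δ/2) * (2*x) + δ * (1 - x) ^ (δ - 1))
    · apply ContinuousOn.sub
      · fun_prop
      · exact (hc.comp (continuous_const.sub continuous_id)).continuousOn
    · intro x hx
      rw [interior_Icc] at hx
      have h2 : HasDerivAt (fun t : ℝ => (1 - t) ^ δ) ((-1) * δ * (1 - x) ^ (δ - 1)) x :=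
        ((hasDerivAt_id x).const_sub 1).rpow_const (Or.inr hδ1)
      have h3 : HasDerivAt G (-δ + (δ/2) * (2*x) + δ * (1 - x) ^ (δ - 1)) x := by
        have h4 := ((((hasDerivAt_id x).const_mul δ).const_sub 1).add
          (((hasDerivAt_pow 2 x)).const_mul (δ/2))).sub h2
        refine h4.congr_deriv ?_
        push_cast
        ring
      exact h3.hasDerivWithinAt
    · intro x hx
      rw [interior_Icc] at hx
      have hb0 : (0:ℝ) < 1 - x := by linarith [hx.2]
      have hb1 : (1:ℝ) - x ≤ 1 := by linarith [hx.1]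
      have key : (1 - x) ≤ (1 - x) ^ (δ - 1) := by
        have := Real.rpow_le_rpow_of_exponent_ge hb0 hb1 (by linarith : δ - 1 ≤ 1)
        simpa using this
      nlinarith
  have h0 : G 0 = 0 := by simp [hG]
  have hm := hmono (Set.mem_Icc.2 ⟨le_refl 0, zero_le_one⟩) (Set.mem_Icc.2 ⟨hs0, hs1⟩) hs0
  rw [h0] at hm
  simp only [hG] at hm
  have hsq : (δ/2) * s^2 ≤ 2 * s ^ δ := by
    rcases eq_or_lt_of_le hs0 with h | h
    · simp [← h, Real.zero_rpow hδ0.ne']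
    · have h1 : s ^ (2:ℝ) ≤ s ^ δ := Real.rpow_le_rpow_of_exponent_ge h hs1 hδ2
      rw [show (2:ℝ) = ((2:ℕ):ℝ) by norm_num, Real.rpow_natCast] at h1
      nlinarith [Real.rpow_nonneg hs0 δ]
  linarith

lemma vbe_core3 {δ : ℝ} (hδ1 : 1 ≤ δ) (hδ2 : δ ≤ 2) {z : ℝ} (hz : 1 ≤ z) :
    (z - 1) ^ δ + δ * z ≤ 1 + 2 * z ^ δ := by
  have hδ0 : (0:ℝ) < δ := lt_of_lt_of_le one_pos hδ1
  have h1 : (z - 1) ^ δ ≤ z ^ δ :=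
    Real.rpow_le_rpow (by linarith) (by linarith) hδ0.le
  have h2 : δ * z ≤ 1 + z ^ δ := by
    set H : ℝ → ℝ := fun z => 1 + z ^ δ - δ * z with hH
    have hc : Continuous fun t : ℝ => t ^ δ := Real.continuous_rpow_const hδ0.le
    have hmono : MonotoneOn H (Set.Ici (1:ℝ)) := by
      apply monotoneOn_of_hasDerivWithinAt_nonneg (convex_Ici 1)
        (f' := fun x => δ * x ^ (δ - 1) - δ)
      · exact (continuous_const.add hc).continuousOn.sub (by fun_prop)
      · intro x hx
        rw [interior_Ici] at hx
        have hx1 : (1:ℝ) < x := hx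
        have hd : HasDerivAt (fun t : ℝ => t ^ δ) (δ * x ^ (δ - 1)) x := by
          simpa using Real.hasDerivAt_rpow_const (x := x) (p := δ)
            (Or.inl (by linarith : x ≠ 0))
        have h3 : HasDerivAt H (δ * x ^ (δ - 1) - δ) x := by
          have h4 := (hd.const_add 1).sub ((hasDerivAt_id x).const_mul δ)
          refine h4.congr_deriv ?_
          simp
        exact h3.hasDerivWithinAt
      · intro x hx
        rw [interior_Ici] at hx
        have : (1:ℝ) ≤ x ^ (δ - 1) := Real.one_le_rpow (le_of_lt hx) (by linarith)
        nlinarith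
    have hm := hmono (Set.self_mem_Ici) (Set.mem_Ici.2 hz) hz
    have h0 : H 1 = 2 - δ := by simp [hH, Real.one_rpow]; ring
    rw [h0] at hm
    simp only [hH] at hm
    linarith
  have hz0 : 0 ≤ z ^ δ := Real.rpow_nonneg (by linarith) δ
  linarith

lemma vbe_core {δ : ℝ} (hδ1 : 1 ≤ δ) (hδ2 : δ ≤ 2) (t : ℝ) :
    |1 + t| ^ δ ≤ 1 + δ * t + 2 * |t| ^ δ := by
  have hδ0 : (0:ℝ) < δ := lt_of_lt_of_le one_pos hδ1
  rcases le_or_gt 0 t with ht | ht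
  · rw [abs_of_nonneg (by linarith), abs_of_nonneg ht]
    have := vbe_core1 hδ1 hδ2 ht
    have h0 : 0 ≤ t ^ δ := Real.rpow_nonneg ht δ
    linarith
  · rcases le_or_gt (-1) t with ht1 | ht1
    · rw [abs_of_nonneg (by linarith), abs_of_neg ht]
      have := vbe_core2 hδ1 hδ2 (by linarith : 0 ≤ -t) (by linarith : -t ≤ 1)
      have he : 1 - -t = 1 + t := by ring
      rw [he] at this
      linarith
    · rw [abs_of_neg (by linarith), abs_of_neg ht]
      have := vbe_core3 hδ1 hδ2 (by linarith : 1 ≤ -t)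
      have he : -t - 1 = -(1+t) := by ring
      rw [he] at this
      linarith

lemma vbe_pointwise_pos {δ : ℝ} (hδ1 : 1 ≤ δ) (hδ2 : δ ≤ 2) {x : ℝ} (hx : 0 < x) (y : ℝ) :
    |x + y| ^ δ ≤ x ^ δ + δ * x ^ (δ - 1) * y + 2 * |y| ^ δ := by
  have h := vbe_core hδ1 hδ2 (y / x)
  have hxδ : (0:ℝ) < x ^ δ := Real.rpow_pos_of_pos hx δ
  have e1 : x ^ δ * |1 + y / x| ^ δ = |x + y| ^ δ := by
    rw [← Real.mul_rpow hx.le (abs_nonneg _)]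
    congr 2
    rw [show x * |1 + y / x| = |x| * |1 + y/x| by rw [abs_of_pos hx], ← abs_mul]
    congr 1
    field_simp
  have e2 : x ^ δ * (δ * (y / x)) = δ * x ^ (δ - 1) * y := by
    rw [Real.rpow_sub_one hx.ne']
    field_simp
  have e3 : x ^ δ * |y / x| ^ δ = |y| ^ δ := by
    rw [← Real.mul_rpow hx.le (abs_nonneg _)]
    congr 2
    rw [show x * |y / x| = |x| * |y/x| by rw [abs_of_pos hx], ← abs_mul]
    congr 1
    field_simp
  have h2 := mul_le_mul_of_nonneg_left h hxδ.le
  rw [e1] at h2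
  calc |x + y| ^ δ ≤ x ^ δ * (1 + δ * (y / x) + 2 * |y / x| ^ δ) := h2
    _ = x ^ δ + δ * x ^ (δ - 1) * y + 2 * |y| ^ δ := by
        rw [mul_add, mul_add, mul_one, e2, mul_comm (2:ℝ) (|y/x|^δ), ← mul_assoc, e3]
        ring

lemma vbe_pointwise {δ : ℝ} (hδ1 : 1 ≤ δ) (hδ2 : δ ≤ 2) (x y : ℝ) :
    |x + y| ^ δ ≤ |x| ^ δ + δ * |x| ^ (δ - 1) * Real.sign x * y + 2 * |y| ^ δ := by
  have hδ0 : (0:ℝ) < δ := lt_of_lt_of_le one_pos hδ1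
  rcases lt_trichotomy x 0 with hx | hx | hx
  · have h := vbe_pointwise_pos hδ1 hδ2 (neg_pos.2 hx) (-y)
    rw [show -x + -y = -(x+y) by ring, abs_neg, abs_neg] at h
    rw [Real.sign_of_neg hx, abs_of_neg hx]
    calc |x + y| ^ δ ≤ (-x) ^ δ + δ * (-x) ^ (δ-1) * (-y) + 2 * |y| ^ δ := h
      _ = (-x) ^ δ + δ * (-x) ^ (δ - 1) * (-1) * y + 2 * |y| ^ δ := by ring
  · subst hx
    simp [Real.zero_rpow hδ0.ne', Real.sign_zero]
    nlinarith [Real.rpow_nonneg (abs_nonneg y) δ]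
  · have h := vbe_pointwise_pos hδ1 hδ2 hx y
    rw [abs_of_pos hx, Real.sign_of_pos hx]
    calc |x + y| ^ δ ≤ x ^ δ + δ * x ^ (δ-1) * y + 2 * |y| ^ δ := h
      _ = x ^ δ + δ * x ^ (δ - 1) * 1 * y + 2 * |y| ^ δ := by ring

lemma vbe_le_one_add {δ : ℝ} (hδ1 : 1 ≤ δ) {a : ℝ} (ha : 0 ≤ a) : a ≤ 1 + a ^ δ := by
  rcases le_or_gt a 1 with h | h
  · have := Real.rpow_nonneg ha δ; linarith
  · have h2 : a ^ (1:ℝ) ≤ a ^ δ := Real.rpow_le_rpow_of_exponent_le h.le hδ1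
    rw [Real.rpow_one] at h2; linarith

lemma vbe_abs_add_rpow {δ : ℝ} (hδ1 : 1 ≤ δ) (hδ2 : δ ≤ 2) (x y : ℝ) :
    |x + y| ^ δ ≤ 4 * (|x| ^ δ + |y| ^ δ) := by
  have hδ0 : (0:ℝ) < δ := lt_of_lt_of_le one_pos hδ1
  have h1 : |x + y| ≤ 2 * max |x| |y| := by
    have := abs_add_le x y
    have := le_max_left |x| |y|; have := le_max_right |x| |y|
    linarith
  have h2 : |x + y| ^ δ ≤ (2 * max |x| |y|) ^ δ :=
    Real.rpow_le_rpow (abs_nonneg _) h1 hδ0.le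
  have hm : (0:ℝ) ≤ max |x| |y| := le_max_of_le_left (abs_nonneg _)
  have h3 : (2 * max |x| |y|) ^ δ = 2 ^ δ * (max |x| |y|) ^ δ :=
    Real.mul_rpow (by norm_num) hm
  have h4 : (2:ℝ) ^ δ ≤ 4 := by
    have := Real.rpow_le_rpow_of_exponent_le (by norm_num : (1:ℝ) ≤ 2) hδ2
    rw [show (2:ℝ) ^ (2:ℝ) = 4 by
      rw [show (2:ℝ) = ((2:ℕ):ℝ) from by norm_num, Real.rpow_natCast]; norm_num] at this
    exact this
  have h5 : (max |x| |y|) ^ δ ≤ |x| ^ δ + |y| ^ δ := by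
    rcases max_cases |x| |y| with ⟨he, _⟩ | ⟨he, _⟩ <;> rw [he] <;>
      nlinarith [Real.rpow_nonneg (abs_nonneg x) δ, Real.rpow_nonneg (abs_nonneg y) δ]
  have hmp : (0:ℝ) ≤ (max |x| |y|) ^ δ := Real.rpow_nonneg hm δ
  nlinarith [Real.rpow_nonneg (abs_nonneg (x+y)) δ]

lemma vbe_sign_measurable : Measurable Real.sign := by
  have : Real.sign = fun r : ℝ => if r < 0 then (-1:ℝ) else if 0 < r then 1 else 0 := rfl
  rw [this]
  exact Measurable.ite measurableSet_Iio measurable_const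
    (Measurable.ite measurableSet_Ioi measurable_const measurable_const)

lemma vbe_rpow_sub_one_le {δ : ℝ} (hδ1 : 1 ≤ δ) {a : ℝ} (ha : 0 ≤ a) :
    a ^ (δ - 1) ≤ 1 + a ^ δ := by
  rcases le_or_gt a 1 with h | h
  · have h1 : a ^ (δ - 1) ≤ 1 := Real.rpow_le_one ha h (by linarith)
    have := Real.rpow_nonneg ha δ
    linarith
  · have h2 : a ^ (δ - 1) ≤ a ^ δ := Real.rpow_le_rpow_of_exponent_le h.le (by linarith)
    linarith

lemma vbe_abs_sign (r : ℝ) : |Real.sign r| ≤ 1 := by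
  rcases Real.sign_apply_eq r with h | h | h <;> rw [h] <;> norm_num

lemma vbe_meas_abs_rpow {Ω : Type*} [MeasurableSpace Ω] {f : Ω → ℝ} (hf : Measurable f)
    {p : ℝ} (hp : 0 ≤ p) : Measurable fun ω => |f ω| ^ p :=
  (Real.continuous_rpow_const hp).measurable.comp hf.abs

lemma vbe_step {Ω : Type*} [MeasurableSpace Ω] (P : Measure Ω) [IsProbabilityMeasure P]
    {δ : ℝ} (hδ1 : 1 ≤ δ) (hδ2 : δ ≤ 2) {X Y : Ω → ℝ} (hX : Measurable X) (hY : Measurable Y)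
    (hind : IndepFun X Y P) (hYmean : ∫ ω, Y ω ∂P = 0)
    (hXint : Integrable (fun ω => |X ω| ^ δ) P)
    (hYint : Integrable (fun ω => |Y ω| ^ δ) P) :
    Integrable (fun ω => |X ω + Y ω| ^ δ) P ∧
      ∫ ω, |X ω + Y ω| ^ δ ∂P ≤ (∫ ω, |X ω| ^ δ ∂P) + 2 * ∫ ω, |Y ω| ^ δ ∂P := by
  have hδ0 : (0:ℝ) < δ := lt_of_lt_of_le one_pos hδ1
  have habs : ∀ (f : Ω → ℝ) (ω : Ω), ‖(|f ω|) ^ δ‖ = |f ω| ^ δ := fun f ω => by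
    rw [Real.norm_eq_abs, abs_of_nonneg (Real.rpow_nonneg (abs_nonneg _) δ)]
  -- integrability of |X+Y|^δ
  have hsum_meas : Measurable fun ω => |X ω + Y ω| ^ δ := vbe_meas_abs_rpow (hX.add hY) hδ0.le
  have hsum_int : Integrable (fun ω => |X ω + Y ω| ^ δ) P := by
    refine Integrable.mono' (((hXint.add hYint).const_mul 4)) hsum_meas.aestronglyMeasurable
      (Filter.Eventually.of_forall fun ω => ?_)
    rw [Real.norm_eq_abs, abs_of_nonneg (Real.rpow_nonneg (abs_nonneg _) δ), Pi.add_apply]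
    exact vbe_abs_add_rpow hδ1 hδ2 (X ω) (Y ω)
  refine ⟨hsum_int, ?_⟩
  -- Y is integrable
  have hYint1 : Integrable Y P := by
    refine Integrable.mono' (Integrable.add (integrable_const 1) hYint)
      hY.aestronglyMeasurable (Filter.Eventually.of_forall fun ω => ?_)
    rw [Real.norm_eq_abs]
    exact vbe_le_one_add hδ1 (abs_nonneg _)
  -- the gradient term
  set g : ℝ → ℝ := fun x => δ * |x| ^ (δ - 1) * Real.sign x with hgdef
  have hgmeas : Measurable g :=
    ((measurable_const.mul ((Real.continuous_rpow_const (by linarith : (0:ℝ) ≤ δ - 1)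
      ).measurable.comp measurable_abs)).mul vbe_sign_measurable)
  have hgX_meas : Measurable fun ω => g (X ω) := hgmeas.comp hX
  have hgX_int : Integrable (fun ω => g (X ω)) P := by
    refine Integrable.mono' (((integrable_const 1).add hXint).const_mul δ)
      hgX_meas.aestronglyMeasurable (Filter.Eventually.of_forall fun ω => ?_)
    rw [Real.norm_eq_abs, hgdef]
    simp only [abs_mul, abs_abs]
    have h1 : |(|X ω|) ^ (δ - 1)| = |X ω| ^ (δ - 1) :=
      abs_of_nonneg (Real.rpow_nonneg (abs_nonneg _) _)
    rw [h1, abs_of_pos hδ0]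
    have h2 := vbe_rpow_sub_one_le hδ1 (abs_nonneg (X ω))
    have h3 := vbe_abs_sign (X ω)
    have h4 : (0:ℝ) ≤ |X ω| ^ (δ - 1) := Real.rpow_nonneg (abs_nonneg _) _
    have h5 : (0:ℝ) ≤ |Real.sign (X ω)| := abs_nonneg _
    calc δ * |X ω| ^ (δ - 1) * |Real.sign (X ω)| ≤ δ * |X ω| ^ (δ - 1) * 1 :=
        mul_le_mul_of_nonneg_left h3 (by positivity)
      _ = δ * |X ω| ^ (δ - 1) := by ring
      _ ≤ δ * (1 + |X ω| ^ δ) := by nlinarith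
  have hind2 : IndepFun (fun ω => g (X ω)) Y P := hind.comp hgmeas measurable_id
  have hcross : ∫ ω, g (X ω) * Y ω ∂P = 0 := by
    have h6 := hind2.integral_mul_eq_mul_integral hgX_int.aestronglyMeasurable hYint1.aestronglyMeasurable
    rw [show ((fun ω => g (X ω)) * Y) = fun ω => g (X ω) * Y ω from rfl] at h6
    rw [h6, hYmean, mul_zero]
  have hcross_int : Integrable (fun ω => g (X ω) * Y ω) P := by
    have := hind2.integrable_mul hgX_int hYint1
    exact this
  -- pointwise bound and conclusion
  have hmono : ∫ ω, |X ω + Y ω| ^ δ ∂P ≤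
      ∫ ω, (|X ω| ^ δ + g (X ω) * Y ω + 2 * |Y ω| ^ δ) ∂P := by
    refine integral_mono hsum_int ((hXint.add hcross_int).add (hYint.const_mul 2)) fun ω => ?_
    exact vbe_pointwise hδ1 hδ2 (X ω) (Y ω)
  have hI1 : Integrable (fun ω => |X ω| ^ δ + g (X ω) * Y ω) P := hXint.add hcross_int
  have hI3 : Integrable (fun ω => 2 * |Y ω| ^ δ) P := hYint.const_mul 2
  rw [integral_add hI1 hI3, integral_add hXint hcross_int, hcross, integral_const_mul] at hmono
  linarith

/-- Lemma 4 (ii) (von Bahr–Esseen): for `1 ≤ δ ≤ 2` and independent, centered random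
variables with finite `δ`-th absolute moments,
`E|ξ₁+⋯+ξₙ|^δ ≤ (2 − 1/n) Σ_j E|ξ_j|^δ`. -/
theorem vonBahrEsseen {Ω : Type*} [MeasurableSpace Ω] (P : Measure Ω)
    [IsProbabilityMeasure P] (n : ℕ) (hn : 0 < n) (ξ : Fin n → Ω → ℝ)
    (hmeas : ∀ j, Measurable (ξ j))
    (hindep : iIndepFun ξ P)
    (hmean : ∀ j, ∫ ω, ξ j ω ∂P = 0)
    (δ : ℝ) (hδ1 : 1 ≤ δ) (hδ2 : δ ≤ 2)
    (hfin : ∀ j, Integrable (fun ω => |ξ j ω| ^ δ) P) :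
    ∫ ω, |∑ j, ξ j ω| ^ δ ∂P ≤ (2 - 1 / n) * ∑ j, ∫ ω, |ξ j ω| ^ δ ∂P := by
  classical
  have claim : ∀ s : Finset (Fin n), ∀ k ∉ s,
      Integrable (fun ω => |∑ j ∈ insert k s, ξ j ω| ^ δ) P ∧
      ∫ ω, |∑ j ∈ insert k s, ξ j ω| ^ δ ∂P ≤
        (∫ ω, |ξ k ω| ^ δ ∂P) + 2 * ∑ j ∈ s, ∫ ω, |ξ j ω| ^ δ ∂P := by
    intro s
    induction s using Finset.induction_on with
    | empty =>
      intro k _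
      constructor
      · simpa using hfin k
      · simp
    | insert a s ha IH =>
      intro k hk
      have hka : k ≠ a := fun h => hk (by simp [h])
      have hks : k ∉ s := fun h => hk (Finset.mem_insert_of_mem h)
      have ha' : a ∉ insert k s := by
        simp only [Finset.mem_insert, not_or]
        exact ⟨fun h => hka h.symm, ha⟩
      obtain ⟨hXint, hXbound⟩ := IH k hks
      have hXmeas : Measurable fun ω => ∑ j ∈ insert k s, ξ j ω :=
        Finset.measurable_sum _ (fun i _ => hmeas i)
      have hind : IndepFun (fun ω => ∑ j ∈ insert k s, ξ j ω) (ξ a) P := by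
        have h7 := hindep.indepFun_finset_sum_of_notMem hmeas ha'
        rwa [show (∑ j ∈ insert k s, ξ j) = fun ω => ∑ j ∈ insert k s, ξ j ω
          from by funext ω; simp] at h7
      obtain ⟨hint2, hb2⟩ := vbe_step P hδ1 hδ2 hXmeas (hmeas a) hind (hmean a) hXint (hfin a)
      have hsum_eq : (fun ω => |∑ j ∈ insert k (insert a s), ξ j ω| ^ δ)
          = fun ω => |(∑ j ∈ insert k s, ξ j ω) + ξ a ω| ^ δ := by
        funext ω
        rw [Finset.insert_comm, Finset.sum_insert ha', add_comm]
      constructor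
      · rw [hsum_eq]; exact hint2
      · rw [hsum_eq, Finset.sum_insert ha]
        have hb3 := hb2
        linarith
  set T := ∑ j, ∫ ω, |ξ j ω| ^ δ ∂P with hT
  set I := ∫ ω, |∑ j, ξ j ω| ^ δ ∂P with hI
  have hk_bound : ∀ k : Fin n, I ≤ 2 * T - ∫ ω, |ξ k ω| ^ δ ∂P := by
    intro k
    have h := (claim (Finset.univ.erase k) k (Finset.notMem_erase k _)).2
    rw [Finset.insert_erase (Finset.mem_univ k)] at h
    rw [Finset.sum_erase_eq_sub (Finset.mem_univ k)] at h
    simp only [← hT] at h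
    linarith [h]
  have hsum := Finset.sum_le_sum (fun k (_ : k ∈ Finset.univ) => hk_bound k)
  rw [Finset.sum_const, Finset.card_univ, Fintype.card_fin, Finset.sum_sub_distrib,
    Finset.sum_const, Finset.card_univ, Fintype.card_fin, ← hT] at hsum
  have hn' : (0:ℝ) < n := by exact_mod_cast hn
  have hns : (n : ℝ) • I = n * I := by simp
  have hns2 : (n : ℝ) ≠ 0 := hn'.ne'
  have key : (n:ℝ) * I ≤ (n:ℝ) * (2 * T) - T := by
    have := hsum
    simp only [nsmul_eq_mul] at this
    linarith
  have hfinal : (n:ℝ) * ((2 - 1/n) * T) = (n:ℝ) * (2*T) - T := by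
    field_simp
  nlinarith [key, hfinal, hn']
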